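/- Let k be a field, G a finite group, and β a normalized 3-cocycle on G with values in kˣ. Let Φ := Σ_{g,h,l ∈ G} β(g,h,l)⁻¹ ⟨g,e⟩ ⊗ ⟨h,e⟩ ⊗ ⟨l,e⟩ in the threefold tensor product algebra D^β(k[G])^{⊗3}. Then Δ is quasi-coassociative with associator Φ: for every a ∈ D^β(k[G]), ((id ⊗ Δ) ∘ Δ)(a) · Φ = Φ · ((Δ ⊗ id) ∘ Δ)(a). -/

import Mathlib

open scoped BigOperators TensorProduct

namespace StringyOrbifold

/-- A normalized 3-cocycle on `G` with values in `kˣ`. -/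
def IsNormalized3Cocycle {k G : Type*} [Field k] [Group G] (β : G → G → G → kˣ) : Prop :=
  (∀ g h l m : G, β g h l * β g (h * l) m * β h l m = β (g * h) l m * β g h (l * m)) ∧
  (∀ g h : G, β 1 g h = 1 ∧ β g 1 h = 1 ∧ β g h 1 = 1)

/-- A normalized 2-cocycle on `G` with values in `kˣ`. -/
def IsNormalized2Cocycle {k G : Type*} [Field k] [Group G] (α : G → G → kˣ) : Prop :=
  (∀ g h l : G, α g h * α (g * h) l = α h l * α g (h * l)) ∧
  (∀ g : G, α g 1 = 1 ∧ α 1 g = 1)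

/-- `θ_g(x,y) = β(g,x,y)·β(x,y,(xy)⁻¹g(xy)) / β(x,x⁻¹gx,y)`. -/
def ddTheta {k G : Type*} [Field k] [Group G] (β : G → G → G → kˣ) (g x y : G) : kˣ :=
  β g x y * β x y ((x * y)⁻¹ * g * (x * y)) / β x (x⁻¹ * g * x) y

/-- `γ_x(g₁,g₂) = β(g₁,g₂,x)·β(x,x⁻¹g₁x,x⁻¹g₂x) / β(g₁,x,x⁻¹g₂x)`. -/
def ddGamma {k G : Type*} [Field k] [Group G] (β : G → G → G → kˣ) (x g1 g2 : G) : kˣ :=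
  β g1 g2 x * β x (x⁻¹ * g1 * x) (x⁻¹ * g2 * x) / β g1 x (x⁻¹ * g2 * x)

/-- The trivial 3-cocycle. -/
def trivCocycle (k G : Type*) [Field k] [Group G] : G → G → G → kˣ := fun _ _ _ => 1

/-- The underlying `k`-vector space of the twisted Drinfel'd double `D^β(k[G])`:
the free `k`-module on the basis `⟨g,x⟩`, `(g,x) ∈ G × G`, realized as functions. -/
abbrev DD (k G : Type*) := G × G → k

/-- The function model for `D^β(k[G]) ⊗ D^β(k[G])`. -/
abbrev DD2 (k G : Type*) := (G × G) × (G × G) → k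

/-- The function model for the threefold tensor power of `D^β(k[G])`. -/
abbrev DD3 (k G : Type*) := (G × G) × (G × G) × (G × G) → k

/-- The basis element `⟨g,x⟩` of `D^β(k[G])`. -/
def ddBasis {k G : Type*} [Field k] [DecidableEq G] (g x : G) : DD k G :=
  fun p => if p = (g, x) then 1 else 0

/-- The multiplication of `D^β(k[G])`, the bilinear extension of
`⟨g,x⟩·⟨h,y⟩ = δ_{g,xhx⁻¹} θ_g(x,y) ⟨g,xy⟩`. -/
def ddMul {k G : Type*} [Field k] [Group G] [Fintype G]
    (β : G → G → G → kˣ) (a b : DD k G) : DD k G :=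
  fun p => ∑ x : G, a (p.1, x) * b (x⁻¹ * p.1 * x, x⁻¹ * p.2) * (ddTheta β p.1 x (x⁻¹ * p.2) : k)

/-- The identity `Σ_{h∈G} ⟨h,e⟩` of `D^β(k[G])`. -/
def ddOne (k G : Type*) [Field k] [Group G] [Fintype G] [DecidableEq G] : DD k G :=
  ∑ g : G, ddBasis g 1

/-- The elementary tensor `a ⊗ b` in the function model of `D^β(k[G]) ⊗ D^β(k[G])`. -/
def ddTensor {k G : Type*} [Field k] (a b : DD k G) : DD2 k G :=
  fun p => a p.1 * b p.2

/-- The elementary tensor `a ⊗ b ⊗ c` in the function model of the triple tensor power. -/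
def ddTensor3 {k G : Type*} [Field k] (a b c : DD k G) : DD3 k G :=
  fun p => a p.1 * b p.2.1 * c p.2.2

/-- Componentwise multiplication on `D^β(k[G]) ⊗ D^{β'}(k[G])` in the function model. -/
def dd2Mul {k G : Type*} [Field k] [Group G] [Fintype G]
    (β β' : G → G → G → kˣ) (a b : DD2 k G) : DD2 k G :=
  fun p => ∑ x : G, ∑ y : G,
    a ((p.1.1, x), (p.2.1, y)) *
      b ((x⁻¹ * p.1.1 * x, x⁻¹ * p.1.2), (y⁻¹ * p.2.1 * y, y⁻¹ * p.2.2)) *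
      (ddTheta β p.1.1 x (x⁻¹ * p.1.2) : k) * (ddTheta β' p.2.1 y (y⁻¹ * p.2.2) : k)

/-- Componentwise multiplication on the threefold tensor power of `D^β(k[G])`. -/
def dd3Mul {k G : Type*} [Field k] [Group G] [Fintype G]
    (β : G → G → G → kˣ) (a b : DD3 k G) : DD3 k G :=
  fun p => ∑ x : G, ∑ y : G, ∑ z : G,
    a ((p.1.1, x), (p.2.1.1, y), (p.2.2.1, z)) *
      b ((x⁻¹ * p.1.1 * x, x⁻¹ * p.1.2), (y⁻¹ * p.2.1.1 * y, y⁻¹ * p.2.1.2),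
        (z⁻¹ * p.2.2.1 * z, z⁻¹ * p.2.2.2)) *
      (ddTheta β p.1.1 x (x⁻¹ * p.1.2) : k) * (ddTheta β p.2.1.1 y (y⁻¹ * p.2.1.2) : k) *
      (ddTheta β p.2.2.1 z (z⁻¹ * p.2.2.2) : k)

/-- The comultiplication of `D^β(k[G])`: the linear extension of
`Δ(⟨g,x⟩) = Σ_{g₁g₂=g} γ_x(g₁,g₂) ⟨g₁,x⟩ ⊗ ⟨g₂,x⟩`. -/
def ddComul {k G : Type*} [Field k] [Group G] [DecidableEq G]
    (β : G → G → G → kˣ) (a : DD k G) : DD2 k G :=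
  fun p =>
    if p.1.2 = p.2.2 then (ddGamma β p.1.2 p.1.1 p.2.1 : k) * a (p.1.1 * p.2.1, p.1.2) else 0

/-- The map `id ⊗ Δ` from `D^β(k[G])^{⊗2}` to `D^β(k[G])^{⊗3}` in the function model. -/
def idTensorComul {k G : Type*} [Field k] [Group G] [DecidableEq G]
    (β : G → G → G → kˣ) (u : DD2 k G) : DD3 k G :=
  fun p => if p.2.1.2 = p.2.2.2 then
      (ddGamma β p.2.1.2 p.2.1.1 p.2.2.1 : k) * u (p.1, (p.2.1.1 * p.2.2.1, p.2.1.2))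
    else 0

/-- The map `Δ ⊗ id` from `D^β(k[G])^{⊗2}` to `D^β(k[G])^{⊗3}` in the function model. -/
def comulTensorId {k G : Type*} [Field k] [Group G] [DecidableEq G]
    (β : G → G → G → kˣ) (u : DD2 k G) : DD3 k G :=
  fun p => if p.1.2 = p.2.1.2 then
      (ddGamma β p.1.2 p.1.1 p.2.1.1 : k) * u ((p.1.1 * p.2.1.1, p.1.2), p.2.2)
    else 0

/-- The flip of the two tensor factors. -/
def ddSwap {k G : Type*} (u : DD2 k G) : DD2 k G := fun p => u (p.2, p.1)

/-- The counit `ε(⟨g,x⟩) = δ_{g,e}` of `D^β(k[G])`. -/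
def ddCounit {k G : Type*} [Field k] [Group G] [Fintype G] (a : DD k G) : k :=
  ∑ x : G, a (1, x)

/-- The injection `k[G]^* → D^β(k[G])`, `δ_g ↦ ⟨g,e⟩`. -/
def ddIota {k G : Type*} [Field k] [Group G] [DecidableEq G] (f : G → k) : DD k G :=
  fun p => if p.2 = 1 then f p.1 else 0

/-- The diagonal map `D^{ββ'}(k[G]) → D^β(k[G]) ⊗ D^{β'}(k[G])`, `⟨g,x⟩ ↦ ⟨g,x⟩ ⊗ ⟨g,x⟩`. -/
def ddDiag {k G : Type*} [Field k] [DecidableEq G] (a : DD k G) : DD2 k G :=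
  fun p => if p.1 = p.2 then a p.1 else 0

/-- The antipode of `D^β(k[G])`: the linear extension of
`S(⟨g,x⟩) = (θ_{g⁻¹}(x,x⁻¹)·γ_x(g,g⁻¹))⁻¹ ⟨x⁻¹g⁻¹x, x⁻¹⟩`. -/
def ddAntipode {k G : Type*} [Field k] [Group G] (β : G → G → G → kˣ) (a : DD k G) : DD k G :=
  fun p =>
    (((ddTheta β (p.2⁻¹ * p.1 * p.2) p.2⁻¹ p.2 *
        ddGamma β p.2⁻¹ (p.2⁻¹ * p.1⁻¹ * p.2) (p.2⁻¹ * p.1 * p.2))⁻¹ : kˣ) : k) *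
      a (p.2⁻¹ * p.1⁻¹ * p.2, p.2⁻¹)

/-- The antipode of the untwisted double `D(k[G])`: `S(⟨g,x⟩) = ⟨x⁻¹g⁻¹x, x⁻¹⟩`. -/
def ddAntipode0 {k G : Type*} [Field k] [Group G] (a : DD k G) : DD k G :=
  fun p => a (p.2⁻¹ * p.1⁻¹ * p.2, p.2⁻¹)

/-- The operator `φ(x)` on `D^β(k[G])^{comm}`: the linear extension of
`φ(x)(⟨h,y⟩) = (θ_{xhx⁻¹}(x,y)/θ_{xhx⁻¹}(xyx⁻¹,x))·⟨xhx⁻¹, xyx⁻¹⟩`. -/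
def ddPhi {k G : Type*} [Field k] [Group G] (β : G → G → G → kˣ) (x : G) (a : DD k G) :
    DD k G :=
  fun p => ((ddTheta β p.1 x (x⁻¹ * p.2 * x) / ddTheta β p.1 p.2 x : kˣ) : k) *
    a (x⁻¹ * p.1 * x, x⁻¹ * p.2 * x)

/-- The span of the basis elements `⟨g,x⟩` with `gx = xg`, i.e. `D^β(k[G])^{comm}`. -/
def ddCommSpan (k G : Type*) [Field k] [Group G] [DecidableEq G] : Submodule k (DD k G) :=
  Submodule.span k {v : DD k G | ∃ g x : G, g * x = x * g ∧ v = ddBasis g x}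

/-- The underlying space of the twisted group ring `k^α[G]`. -/
abbrev TG (k G : Type*) := G → k

/-- The basis element `1_g` of `k^α[G]`. -/
def tgBasis {k G : Type*} [Field k] [DecidableEq G] (g : G) : TG k G :=
  fun z => if z = g then 1 else 0

/-- The multiplication `1_g·1_h = α(g,h) 1_{gh}` of the twisted group ring `k^α[G]`. -/
def tgMul {k G : Type*} [Field k] [Group G] [Fintype G] (α : G → G → kˣ) (a b : TG k G) :
    TG k G :=
  fun z => ∑ x : G, a x * b (x⁻¹ * z) * (α x (x⁻¹ * z) : k)

/-- The identity `1_e` of `k^α[G]`. -/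
def tgOne (k G : Type*) [Field k] [Group G] [DecidableEq G] : TG k G := tgBasis 1

/-- The inverse `α(g,g⁻¹)⁻¹·1_{g⁻¹}` of the basis element `1_g` in `k^α[G]`. -/
def tgInvBasis {k G : Type*} [Field k] [Group G] [DecidableEq G] (α : G → G → kˣ) (g : G) :
    TG k G :=
  (((α g g⁻¹)⁻¹ : kˣ) : k) • tgBasis g⁻¹

/-- Conjugation `ρ(g)(a) = 1_g · a · (1_g)⁻¹` in the twisted group ring `k^α[G]`. -/
def tgConj {k G : Type*} [Field k] [Group G] [Fintype G] [DecidableEq G]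
    (α : G → G → kˣ) (g : G) (a : TG k G) : TG k G :=
  tgMul α (tgBasis g) (tgMul α a (tgInvBasis α g))

theorem comm_inv_left {G : Type*} [Group G] {g x : G} (h : x * g = g * x) :
    x⁻¹ * g = g * x⁻¹ := by
  rw [eq_mul_inv_iff_mul_eq, mul_assoc, ← h, ← mul_assoc, inv_mul_cancel, one_mul]

theorem comm_inv_mul {G : Type*} [Group G] {g x z : G} (hx : x * g = g * x)
    (hz : z * g = g * z) : (x⁻¹ * z) * g = g * (x⁻¹ * z) := by
  rw [mul_assoc, hz, ← mul_assoc, comm_inv_left hx, mul_assoc]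

/-- The index set `{(g,x) : x ∈ Z(g)}` of the direct sum `⊕_g k^{θ_g}[Z(g)]`. -/
abbrev CentPairs (G : Type*) [Group G] := Σ g : G, {x : G // x * g = g * x}

/-- The underlying space of `⊕_g k^{θ_g}[Z(g)]`. -/
abbrev TY (k G : Type*) [Group G] := CentPairs G → k

/-- The multiplication of `⊕_g k^{θ_g}[Z(g)]`: in the `g`-th summand,
`1_x·1_y = θ_g(x,y)·1_{xy}` for `x, y ∈ Z(g)`, and distinct summands multiply to `0`. -/
def tyMul {k G : Type*} [Field k] [Group G] [Fintype G] [DecidableEq G]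
    (β : G → G → G → kˣ) (a b : TY k G) : TY k G :=
  fun q => ∑ x : {x : G // x * q.1 = q.1 * x},
    a ⟨q.1, x⟩ * b ⟨q.1, ⟨(x : G)⁻¹ * (q.2 : G), comm_inv_mul x.2 q.2.2⟩⟩ *
      (ddTheta β q.1 (x : G) ((x : G)⁻¹ * (q.2 : G)) : k)

/-- The identity of `⊕_g k^{θ_g}[Z(g)]`. -/
def tyOne (k G : Type*) [Field k] [Group G] [DecidableEq G] : TY k G :=
  fun q => if (q.2 : G) = 1 then 1 else 0

/-- The map `⊕_g k^{θ_g}[Z(g)] → D^β(k[G])` sending `1_x` in the `g`-th summand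
to `⟨g,x⟩`. -/
def tyMap {k G : Type*} [Field k] [Group G] [DecidableEq G] (f : TY k G) : DD k G :=
  fun p => if h : p.2 * p.1 = p.1 * p.2 then f ⟨p.1, ⟨p.2, h⟩⟩ else 0

/-- The action of `D^{ββ'}(k[G])` on `A ⊗ B`, assigning to `⟨g,x⟩` the endomorphism
`ρ_A(⟨g,x⟩) ⊗ ρ_B(⟨g,x⟩)` and extending linearly. -/
noncomputable def ddTensorAction {k G A B : Type*} [Field k] [Group G] [Fintype G]
    [DecidableEq G] [AddCommGroup A] [Module k A] [AddCommGroup B] [Module k B]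
    (ρA : DD k G → (A →ₗ[k] A)) (ρB : DD k G → (B →ₗ[k] B)) (a : DD k G) :
    (A ⊗[k] B) →ₗ[k] (A ⊗[k] B) :=
  ∑ p : G × G, a p • TensorProduct.map (ρA (ddBasis p.1 p.2)) (ρB (ddBasis p.1 p.2))


theorem theta_one_right {k G : Type*} [Field k] [Group G] {β : G → G → G → kˣ}
    (hβ : IsNormalized3Cocycle β) (g x : G) : ddTheta β g x 1 = 1 := by
  simp [ddTheta, (hβ.2 _ _).2.2, (hβ.2 _ _).2.1]

theorem theta_one_left {k G : Type*} [Field k] [Group G] {β : G → G → G → kˣ}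
    (hβ : IsNormalized3Cocycle β) (g y : G) : ddTheta β g 1 y = 1 := by
  simp [ddTheta, (hβ.2 _ _).1, (hβ.2 _ _).2.1]

theorem phi_apply {k G : Type*} [Field k] [Group G] [Fintype G] [DecidableEq G]
    (β : G → G → G → kˣ) (q : (G × G) × (G × G) × (G × G)) :
    (∑ g : G, ∑ h : G, ∑ l : G,
        (((β g h l)⁻¹ : kˣ) : k) • ddTensor3 (ddBasis g 1) (ddBasis h 1) (ddBasis l 1)) q =
    if q.1.2 = 1 ∧ q.2.1.2 = 1 ∧ q.2.2.2 = 1 then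
      (((β q.1.1 q.2.1.1 q.2.2.1)⁻¹ : kˣ) : k) else 0 := by
  simp only [Finset.sum_apply, Pi.smul_apply, smul_eq_mul, ddTensor3, ddBasis,
    Prod.mk.injEq, Prod.ext_iff]
  simp [ite_and, mul_ite, ite_mul, Finset.sum_ite_eq, Finset.sum_ite_eq']
  by_cases h1 : q.1.2 = 1 <;> by_cases h2 : q.2.1.2 = 1 <;> by_cases h3 : q.2.2.2 = 1 <;>
    simp [h1, h2, h3]

theorem gamma_key {k G : Type*} [Field k] [Group G] (β : G → G → G → kˣ)
    (hβ : IsNormalized3Cocycle β) (x g1 g2 g3 : G) :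
    ((β g1 g2 g3 : kˣ) : k) * (ddGamma β x g1 (g2*g3) : k) * (ddGamma β x g2 g3 : k) =
    (ddGamma β x g1 g2 : k) * (ddGamma β x (g1*g2) g3 : k) *
      ((β (x⁻¹*g1*x) (x⁻¹*g2*x) (x⁻¹*g3*x) : kˣ) : k) := by
  set c : G → G → G → k := fun u v w => ((β u v w : kˣ) : k) with hc
  have e23 : x⁻¹ * (g2*g3) * x = (x⁻¹*g2*x) * (x⁻¹*g3*x) := by group
  have e12 : x⁻¹ * (g1*g2) * x = (x⁻¹*g1*x) * (x⁻¹*g2*x) := by group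
  have ex1 : x * (x⁻¹*g1*x) = g1 * x := by group
  have ex2 : x * (x⁻¹*g2*x) = g2 * x := by group
  have ex3 : x * (x⁻¹*g3*x) = g3 * x := by group
  have h1 := congrArg (Units.val) (hβ.1 g1 g2 g3 x)
  have h2 := congrArg (Units.val) (hβ.1 x (x⁻¹*g1*x) (x⁻¹*g2*x) (x⁻¹*g3*x))
  have h3 := congrArg (Units.val) (hβ.1 g1 g2 x (x⁻¹*g3*x))
  have h4 := congrArg (Units.val) (hβ.1 g1 x (x⁻¹*g2*x) (x⁻¹*g3*x))
  rw [ex1] at h2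
  rw [ex3] at h3
  rw [ex2] at h4
  push_cast at h1 h2 h3 h4
  set B := c g1 g2 g3
  set B' := c (x⁻¹*g1*x) (x⁻¹*g2*x) (x⁻¹*g3*x)
  set n1a := c g1 (g2*g3) x
  set n1b := c x (x⁻¹*g1*x) ((x⁻¹*g2*x) * (x⁻¹*g3*x))
  set d1 := c g1 x ((x⁻¹*g2*x) * (x⁻¹*g3*x))
  set n2a := c g2 g3 x
  set n2b := c x (x⁻¹*g2*x) (x⁻¹*g3*x)
  set d2 := c g2 x (x⁻¹*g3*x)
  set n3a := c g1 g2 x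
  set n3b := c x (x⁻¹*g1*x) (x⁻¹*g2*x)
  set d3 := c g1 x (x⁻¹*g2*x)
  set n4a := c (g1*g2) g3 x
  set n4b := c x ((x⁻¹*g1*x)*(x⁻¹*g2*x)) (x⁻¹*g3*x)
  set d4 := c (g1*g2) x (x⁻¹*g3*x)
  set X := c (g1*x) (x⁻¹*g2*x) (x⁻¹*g3*x)
  set Y := c g1 (g2*x) (x⁻¹*g3*x)
  set W := c g1 g2 (g3*x)
  have hX : X ≠ 0 := Units.ne_zero _
  have hY : Y ≠ 0 := Units.ne_zero _
  have main : B * n1a * n1b * n2a * n2b * d3 * d4 * (X * Y) =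
      n3a * n3b * n4a * n4b * B' * d1 * d2 * (X * Y) := by
    linear_combination (n1b*n2b*d3*d4*X*Y) * h1 - (n4a*W*n2b*d3*d4*Y) * h2 -
      (n3b*n4b*B'*n4a*n2b*d3*Y) * h3 + (n3a*n3b*n4a*n4b*B'*d2*Y) * h4
  have main' : B * n1a * n1b * n2a * n2b * d3 * d4 =
      n3a * n3b * n4a * n4b * B' * d1 * d2 :=
    mul_right_cancel₀ (mul_ne_zero hX hY) main
  simp only [ddGamma, e23, e12]
  push_cast
  field_simp
  linear_combination main'

/-- `Δ` is quasi-coassociative with associator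
`Φ = Σ β(g,h,l)⁻¹ ⟨g,e⟩⊗⟨h,e⟩⊗⟨l,e⟩`. -/
theorem stmt6 {k G : Type*} [Field k] [Group G] [Fintype G] [DecidableEq G]
    (β : G → G → G → kˣ) (hβ : IsNormalized3Cocycle β) :
    ∀ a : DD k G,
      dd3Mul β (idTensorComul β (ddComul β a))
        (∑ g : G, ∑ h : G, ∑ l : G,
          (((β g h l)⁻¹ : kˣ) : k) • ddTensor3 (ddBasis g 1) (ddBasis h 1) (ddBasis l 1)) =
      dd3Mul β
        (∑ g : G, ∑ h : G, ∑ l : G,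
          (((β g h l)⁻¹ : kˣ) : k) • ddTensor3 (ddBasis g 1) (ddBasis h 1) (ddBasis l 1))
        (comulTensorId β (ddComul β a)) := by
  intro a
  funext p
  obtain ⟨⟨g1, x1⟩, ⟨g2, x2⟩, ⟨g3, x3⟩⟩ := p
  simp only [dd3Mul, phi_apply]
  simp only [inv_mul_eq_one, inv_mul_cancel, theta_one_right hβ, theta_one_left hβ]
  simp only [ite_and, mul_ite, ite_mul, mul_zero, zero_mul, mul_one,
    Finset.sum_ite_eq, Finset.sum_ite_eq', Finset.mem_univ, if_true]
  simp only [Finset.sum_ite_irrel, Finset.sum_const_zero, Finset.sum_ite_eq',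
    Finset.mem_univ, if_true, inv_mul_cancel, inv_one, one_mul,
    theta_one_right hβ, theta_one_left hβ, Units.val_one, mul_one]
  simp only [idTensorComul, comulTensorId, ddComul]
  by_cases h12 : x1 = x2
  · subst h12
    by_cases h23 : x1 = x3
    · subst h23
      simp only [if_pos rfl]
      have key := gamma_key β hβ x1 g1 g2 g3
      rw [← mul_assoc g1 g2 g3]
      set A := a (g1 * g2 * g3, x1)
      set B := ((β g1 g2 g3 : kˣ) : k)
      set B' := ((β (x1⁻¹*g1*x1) (x1⁻¹*g2*x1) (x1⁻¹*g3*x1) : kˣ) : k)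
      push_cast
      have hB : B ≠ 0 := Units.ne_zero _
      have hB' : B' ≠ 0 := Units.ne_zero _
      field_simp
      linear_combination A * key
    · simp [if_neg h23, if_neg (Ne.symm h23)]
  · simp [if_neg h12, if_neg (Ne.symm h12)]

end StringyOrbifold
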